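/- arXiv:2310.15616 — 3 statements merged into one kernel-verified Lean document; each statement's English description precedes it below -/
import Mathlib

section
/- If v ∈ Lᵖ satisfies v ≥ 0 a.e., v ≠ 0 and T v = λ v for some real λ, then the set supp(v) is T-invariant. -/
open MeasureTheory ENNReal Filter Set

noncomputable section

namespace PaperAtoms

variable {Ω : Type*} [MeasurableSpace Ω] {μ : MeasureTheory.Measure Ω} {p : ℝ≥0∞} [Fact (1 ≤ p)]

/-- `T` is a positive operator on `Lp`. -/
def IsPositiveOp (T : Lp ℝ p μ →L[ℝ] Lp ℝ p μ) : Prop :=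
  ∀ f : Lp ℝ p μ, 0 ≤ f → 0 ≤ T f

/-- A measurable set `A` is `T`-invariant if `T f` vanishes a.e. on `Aᶜ` for every
nonnegative `f ∈ Lp` vanishing a.e. on `Aᶜ`. -/
def Invariant (T : Lp ℝ p μ →L[ℝ] Lp ℝ p μ) (A : Set Ω) : Prop :=
  MeasurableSet A ∧
    ∀ f : Lp ℝ p μ, 0 ≤ f → (∀ᵐ x ∂μ, x ∉ A → f x = 0) → ∀ᵐ x ∂μ, x ∉ A → T f x = 0

/-- `A` is `T`-co-invariant if `Aᶜ` is `T`-invariant. -/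
def CoInvariant (T : Lp ℝ p μ →L[ℝ] Lp ℝ p μ) (A : Set Ω) : Prop :=
  Invariant T Aᶜ

/-- `A` is `T`-admissible if it belongs to the σ-field generated by the `T`-invariant sets. -/
def Admissible (T : Lp ℝ p μ →L[ℝ] Lp ℝ p μ) (A : Set Ω) : Prop :=
  MeasurableSet[MeasurableSpace.generateFrom {B : Set Ω | Invariant T B}] A

/-- A `T`-atom is a minimal `T`-admissible set with positive measure. -/
def Atom (T : Lp ℝ p μ →L[ℝ] Lp ℝ p μ) (A : Set Ω) : Prop :=
  Admissible T A ∧ 0 < μ A ∧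
    ∀ B : Set Ω, Admissible T B → B ≤ᵐ[μ] A → μ B = 0 ∨ B =ᵐ[μ] A

/-- `FA` is (a version of) the future of `A`: the minimal `T`-invariant set containing `A` a.e. -/
def IsFuture (T : Lp ℝ p μ →L[ℝ] Lp ℝ p μ) (A FA : Set Ω) : Prop :=
  Invariant T FA ∧ A ≤ᵐ[μ] FA ∧
    ∀ B : Set Ω, Invariant T B → A ≤ᵐ[μ] B → FA ≤ᵐ[μ] B

/-- `PA` is (a version of) the past of `A`: the minimal `T`-co-invariant set containing `A` a.e. -/
def IsPast (T : Lp ℝ p μ →L[ℝ] Lp ℝ p μ) (A PA : Set Ω) : Prop :=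
  CoInvariant T PA ∧ A ≤ᵐ[μ] PA ∧
    ∀ B : Set Ω, CoInvariant T B → A ≤ᵐ[μ] B → PA ≤ᵐ[μ] B

/-- `A` is `T`-convex if `A = F(A) ∩ P(A)` a.e. -/
def Convexe (T : Lp ℝ p μ →L[ℝ] Lp ℝ p μ) (A : Set Ω) : Prop :=
  MeasurableSet A ∧
    ∃ FA PA : Set Ω, IsFuture T A FA ∧ IsPast T A PA ∧ A =ᵐ[μ] (FA ∩ PA : Set Ω)

/-- Multiplication by the indicator function of `A`, as a bounded operator on `Lp`
(defined as `0` if `A` is not measurable). -/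
def indicatorCLM (μ : MeasureTheory.Measure Ω) (p : ℝ≥0∞) [Fact (1 ≤ p)] (A : Set Ω) :
    Lp ℝ p μ →L[ℝ] Lp ℝ p μ := by
  classical
  exact if hA : MeasurableSet A then
    LinearMap.mkContinuous
      { toFun := fun f => ((Lp.memLp f).indicator hA).toLp (A.indicator f)
        map_add' := fun f g => by
          rw [← MemLp.toLp_add]
          refine MemLp.toLp_congr _ _ ?_
          filter_upwards [Lp.coeFn_add f g] with x hx
          simp only [Pi.add_apply, Set.indicator_apply, hx]
          split <;> simp
        map_smul' := fun c f => by
          rw [RingHom.id_apply, ← MemLp.toLp_const_smul]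
          refine MemLp.toLp_congr _ _ ?_
          filter_upwards [Lp.coeFn_smul c f] with x hx
          simp only [Pi.smul_apply, Set.indicator_apply, hx, smul_eq_mul]
          split <;> simp }
      1
      (fun f => by
        simp only [LinearMap.coe_mk, AddHom.coe_mk, one_mul]
        rw [Lp.norm_toLp, Lp.norm_def]
        exact ENNReal.toReal_mono (Lp.eLpNorm_ne_top f) (eLpNorm_indicator_le _))
  else 0

/-- The restriction `T_A = 1_A T 1_A` of `T` to a measurable set `A`. -/
def restrictOp (T : Lp ℝ p μ →L[ℝ] Lp ℝ p μ) (A : Set Ω) : Lp ℝ p μ →L[ℝ] Lp ℝ p μ :=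
  (indicatorCLM μ p A).comp (T.comp (indicatorCLM μ p A))

/-- The spectral radius of a bounded operator, via Gelfand's formula
`ρ(T) = inf_n ‖Tⁿ‖^(1/n) = lim_n ‖Tⁿ‖^(1/n)`. -/
def specRadius (T : Lp ℝ p μ →L[ℝ] Lp ℝ p μ) : ℝ :=
  ⨅ n : ℕ, ‖T ^ (n + 1)‖ ^ (((n : ℝ) + 1)⁻¹)

/-- The spectral radius `ρ(A)` of the restriction of `T` to `A`. -/
def rhoSet (T : Lp ℝ p μ →L[ℝ] Lp ℝ p μ) (A : Set Ω) : ℝ :=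
  specRadius (restrictOp T A)

/-- A measurable set `A` with `μ A > 0` is `T`-irreducible if the restriction of `T` to `A`
is irreducible, i.e. every `T_A`-invariant subset of `A` is a.e. trivial. -/
def Irreducible (T : Lp ℝ p μ →L[ℝ] Lp ℝ p μ) (A : Set Ω) : Prop :=
  MeasurableSet A ∧ 0 < μ A ∧
    ∀ B : Set Ω, Invariant (restrictOp T A) B → B ≤ᵐ[μ] A → μ B = 0 ∨ B =ᵐ[μ] A

/-- `T` is power compact if some power `T^k`, `k ≥ 1`, is a compact operator. -/
def PowerCompact (T : Lp ℝ p μ →L[ℝ] Lp ℝ p μ) : Prop :=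
  ∃ k : ℕ, 1 ≤ k ∧ IsCompactOperator (⇑(T ^ k))

/-- `B ≼ A` for atoms: `B ⊆ F(A)` a.e. -/
def Prec (T : Lp ℝ p μ →L[ℝ] Lp ℝ p μ) (B A : Set Ω) : Prop :=
  ∃ FA : Set Ω, IsFuture T A FA ∧ B ≤ᵐ[μ] FA

/-- `B ≺ A` for atoms: `B ⊆ F(A)` a.e. and `B ≠ A` a.e. -/
def PrecStrict (T : Lp ℝ p μ →L[ℝ] Lp ℝ p μ) (B A : Set Ω) : Prop :=
  Prec T B A ∧ ¬ (B =ᵐ[μ] A)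

/-- A critical atom: a `T`-atom whose spectral radius equals that of `T`. -/
def CriticalAtom (T : Lp ℝ p μ →L[ℝ] Lp ℝ p μ) (A : Set Ω) : Prop :=
  Atom T A ∧ rhoSet T A = specRadius T

/-- There is a chain `A = A_0 ≻ A_1 ≻ ⋯ ≻ A_n` of critical atoms starting at `A`. -/
def ChainFrom (T : Lp ℝ p μ →L[ℝ] Lp ℝ p μ) (A : Set Ω) (n : ℕ) : Prop :=
  ∃ c : ℕ → Set Ω, c 0 = A ∧ (∀ i ≤ n, CriticalAtom T (c i)) ∧
    ∀ i < n, PrecStrict T (c (i + 1)) (c i)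

/-- The generalized eigenspace `⋃ₖ ker (T - λ id)^k` of `T` at `λ`. -/
def genEigenspace (T : Lp ℝ p μ →L[ℝ] Lp ℝ p μ) (l : ℝ) : Submodule ℝ (Lp ℝ p μ) :=
  ⨆ k : ℕ, LinearMap.ker (((T - l • (1 : Lp ℝ p μ →L[ℝ] Lp ℝ p μ)) ^ k : Lp ℝ p μ →L[ℝ] Lp ℝ p μ) : Lp ℝ p μ →ₗ[ℝ] Lp ℝ p μ)

/-- The algebraic multiplicity of `λ` for `T`. -/
def algMult (T : Lp ℝ p μ →L[ℝ] Lp ℝ p μ) (l : ℝ) : ℕ :=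
  Module.finrank ℝ ↥(genEigenspace T l)

/-- The set of `k` at which the kernels of `(T - ρ(T) id)^k` stabilize; the ascent of `T`
at `ρ(T)` is its infimum. -/
def ascentSet (T : Lp ℝ p μ →L[ℝ] Lp ℝ p μ) : Set ℕ :=
  {k : ℕ | LinearMap.ker (((T - specRadius T • (1 : Lp ℝ p μ →L[ℝ] Lp ℝ p μ)) ^ k : Lp ℝ p μ →L[ℝ] Lp ℝ p μ) : Lp ℝ p μ →ₗ[ℝ] Lp ℝ p μ)
      = LinearMap.ker (((T - specRadius T • (1 : Lp ℝ p μ →L[ℝ] Lp ℝ p μ)) ^ (k + 1) : Lp ℝ p μ →L[ℝ] Lp ℝ p μ) : Lp ℝ p μ →ₗ[ℝ] Lp ℝ p μ)}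

/-- `D` is (a version of) the set `T(C)`, i.e. the support of `T(1_C f)` for any a.e.
positive `f ∈ Lp`. -/
def IsImage (T : Lp ℝ p μ →L[ℝ] Lp ℝ p μ) (C D : Set Ω) : Prop :=
  MeasurableSet C ∧ MeasurableSet D ∧
    ∀ f : Lp ℝ p μ, (∀ᵐ x ∂μ, 0 < f x) →
      D =ᵐ[μ] ({x | T (indicatorCLM μ p C f) x ≠ 0} : Set Ω)

/-- `D` is (a version of) the `k`-fold iterated image `T^k(C)`. -/
def IsIterImage (T : Lp ℝ p μ →L[ℝ] Lp ℝ p μ) : ℕ → Set Ω → Set Ω → Prop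
  | 0, C, D => D = C
  | (k + 1), C, D => ∃ E : Set Ω, IsIterImage T k C E ∧ IsImage T E D

variable {Ω : Type*} [MeasurableSpace Ω] {μ : MeasureTheory.Measure Ω} {p : ℝ≥0∞}

theorem statement8 [SigmaFinite μ] (hμ : μ Set.univ ≠ 0) [Fact (1 ≤ p)]
    (hp : 1 < p) (hp' : p ≠ ∞)
    (T : Lp ℝ p μ →L[ℝ] Lp ℝ p μ) (hT : IsPositiveOp T)
    (v : Lp ℝ p μ) (hv0 : 0 ≤ v) (hvne : v ≠ 0) (l : ℝ) (hev : T v = l • v) :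
    Invariant T ({x | v x ≠ 0}) := by
  classical
  have hp0 : p ≠ 0 := by
    intro h; rw [h] at hp; exact absurd hp (by simp)
  have pr_pos : 0 < p.toReal := ENNReal.toReal_pos hp0 hp'
  have hvm : StronglyMeasurable (⇑v) := Lp.stronglyMeasurable v
  have hAm : MeasurableSet {x | v x ≠ 0} := by
    exact (hvm.measurable (measurableSet_singleton (0 : ℝ))).compl
  refine ⟨hAm, ?_⟩
  intro f hf hfz
  -- monotonicity of T
  have hmono : ∀ a b : Lp ℝ p μ, a ≤ b → T a ≤ T b := by
    intro a b hab
    have := hT (b - a) (by rwa [sub_nonneg])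
    rw [map_sub] at this
    exact sub_nonneg.mp this
  -- the truncations
  set g : ℕ → Lp ℝ p μ := fun n => f ⊓ ((n : ℝ) • v) with hg
  have hsv : ∀ n : ℕ, 0 ≤ ((n : ℝ) • v) := by
    intro n
    rw [← Lp.coeFn_nonneg]
    filter_upwards [Lp.coeFn_smul (n : ℝ) v, (Lp.coeFn_nonneg v).2 hv0] with x hx hvx
    rw [hx]
    simpa using mul_nonneg (n.cast_nonneg) hvx
  have hg0 : ∀ n, 0 ≤ g n := fun n => le_inf hf (hsv n)
  have hgv : ∀ n, g n ≤ (n : ℝ) • v := fun n => inf_le_right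
  have hTle : ∀ n, T (g n) ≤ (n : ℝ) • (l • v) := by
    intro n
    have := hmono _ _ (hgv n)
    rwa [ContinuousLinearMap.map_smul, hev] at this
  -- T (g n) vanishes a.e. on {v = 0}
  have key : ∀ n, ∀ᵐ x ∂μ, v x = 0 → T (g n) x = 0 := by
    intro n
    filter_upwards [(Lp.coeFn_nonneg _).2 (hT _ (hg0 n)), (Lp.coeFn_le _ _).2 (hTle n),
      Lp.coeFn_smul (n : ℝ) (l • v), Lp.coeFn_smul l v] with x h1 h2 h3 h4 hx
    have hub : ((n : ℝ) • (l • v) : Lp ℝ p μ) x = (n : ℝ) * (l * v x) := by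
      rw [h3]; simp [h4]
    rw [hub, hx, mul_zero, mul_zero] at h2
    exact le_antisymm h2 h1
  -- pointwise description of g n
  have hgco : ∀ᵐ x ∂μ, ∀ n : ℕ, g n x = min (f x) ((n : ℝ) * v x) := by
    rw [ae_all_iff]
    intro n
    filter_upwards [Lp.coeFn_inf f ((n : ℝ) • v), Lp.coeFn_smul (n : ℝ) v] with x h1 h2
    rw [hg, h1]
    rw [Pi.inf_apply, h2, Pi.smul_apply, smul_eq_mul]
  -- pointwise a.e. limit of the integrands
  have hptlim : ∀ᵐ x ∂μ,
      Tendsto (fun n => (‖g n x - f x‖₊ : ℝ≥0∞) ^ p.toReal) atTop (nhds 0) := by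
    filter_upwards [hgco, (Lp.coeFn_nonneg v).2 hv0, (Lp.coeFn_nonneg f).2 hf, hfz]
      with x hgx hvx hfx hfzx
    have hev0 : ∀ᶠ n in atTop, (‖g n x - f x‖₊ : ℝ≥0∞) ^ p.toReal = 0 := by
      rcases eq_or_lt_of_le hvx with hv | hv
      · have hf0 : f x = 0 := hfzx (by simp [← hv])
        refine Eventually.of_forall fun n => ?_
        rw [hgx n, ← hv, hf0]
        simp [ENNReal.zero_rpow_of_pos pr_pos]
      · obtain ⟨N, hN⟩ := exists_nat_ge (f x / v x)
        refine eventually_atTop.2 ⟨N, fun n hn => ?_⟩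
        have hle : f x ≤ (n : ℝ) * v x := by
          rw [div_le_iff₀ hv] at hN
          calc f x ≤ (N : ℝ) * v x := hN
            _ ≤ (n : ℝ) * v x :=
                mul_le_mul_of_nonneg_right (Nat.cast_le.2 hn) hv.le
        rw [hgx n, min_eq_left hle]
        simp [ENNReal.zero_rpow_of_pos pr_pos]
    exact Tendsto.congr' (hev0.mono fun n h => h.symm) tendsto_const_nhds
  -- domination
  have hbd : ∀ n, (fun x => (‖g n x - f x‖₊ : ℝ≥0∞) ^ p.toReal)
      ≤ᵐ[μ] fun x => (‖f x‖₊ : ℝ≥0∞) ^ p.toReal := by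
    intro n
    filter_upwards [hgco, (Lp.coeFn_nonneg f).2 hf, (Lp.coeFn_nonneg v).2 hv0]
      with x hgx hfx hvx
    have h1 : 0 ≤ g n x := by
      rw [hgx n]; exact le_min hfx (mul_nonneg n.cast_nonneg hvx)
    have h2 : g n x ≤ f x := by rw [hgx n]; exact min_le_left _ _
    have hnn : ‖g n x - f x‖₊ ≤ ‖f x‖₊ := by
      rw [← NNReal.coe_le_coe]
      simp only [coe_nnnorm, Real.norm_eq_abs]
      rw [abs_of_nonpos (by linarith), abs_of_nonneg hfx]
      linarith
    exact ENNReal.rpow_le_rpow (ENNReal.coe_le_coe.2 hnn) pr_pos.le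
  have hfin : ∫⁻ x, (‖f x‖₊ : ℝ≥0∞) ^ p.toReal ∂μ ≠ ∞ :=
    (lintegral_rpow_enorm_lt_top_of_eLpNorm_lt_top hp0 hp' (Lp.eLpNorm_lt_top f)).ne
  have hFmeas : ∀ n, Measurable fun x => (‖g n x - f x‖₊ : ℝ≥0∞) ^ p.toReal := by
    intro n
    exact (((Lp.stronglyMeasurable (g n)).sub (Lp.stronglyMeasurable f)).measurable.enorm).pow_const _
  -- convergence of the integrals
  have hlint : Tendsto (fun n => ∫⁻ x, (‖g n x - f x‖₊ : ℝ≥0∞) ^ p.toReal ∂μ)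
      atTop (nhds 0) := by
    have := tendsto_lintegral_of_dominated_convergence _ hFmeas hbd hfin hptlim
    simpa using this
  -- Lp convergence g n → f
  have htend : Tendsto g atTop (nhds f) := by
    rw [Lp.tendsto_Lp_iff_tendsto_eLpNorm']
    have heq : ∀ n : ℕ, eLpNorm (⇑(g n) - ⇑f) p μ
        = (∫⁻ x, (‖g n x - f x‖₊ : ℝ≥0∞) ^ p.toReal ∂μ) ^ (1 / p.toReal) := fun n => by
      rw [eLpNorm_eq_lintegral_rpow_enorm_toReal hp0 hp']
      rfl
    simp_rw [heq]
    have hcont := (ENNReal.continuous_rpow_const (y := 1 / p.toReal)).tendsto 0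
    have hcomp := hcont.comp hlint
    have h0 : (0 : ℝ≥0∞) ^ (1 / p.toReal) = 0 :=
      ENNReal.zero_rpow_of_pos (by positivity)
    rw [h0] at hcomp
    exact hcomp
  -- the indicator operator of Z = {v = 0}
  set Z : Set Ω := {x | v x ≠ 0}ᶜ with hZdef
  have hZ : MeasurableSet Z := hAm.compl
  have hScoe : ∀ u : Lp ℝ p μ, ⇑(indicatorCLM μ p Z u) =ᵐ[μ] Z.indicator ⇑u := by
    intro u
    simp only [indicatorCLM, dif_pos hZ, LinearMap.mkContinuous_apply, LinearMap.coe_mk,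
      AddHom.coe_mk]
    exact MemLp.coeFn_toLp _
  set S : Lp ℝ p μ →L[ℝ] Lp ℝ p μ := (indicatorCLM μ p Z).comp T with hS
  have hSgn : ∀ n, S (g n) = 0 := by
    intro n
    have : ⇑(S (g n)) =ᵐ[μ] 0 := by
      have hcoe : ⇑(S (g n)) =ᵐ[μ] Z.indicator ⇑(T (g n)) := by
        rw [hS]; exact hScoe (T (g n))
      filter_upwards [hcoe, key n] with x h1 h2
      rw [h1]
      by_cases hx : x ∈ Z
      · rw [Set.indicator_of_mem hx]
        have hvx : v x = 0 := by
          simpa [hZdef, Set.mem_compl_iff, Set.mem_setOf_eq, not_not] using hx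
        simpa using h2 hvx
      · rw [Set.indicator_of_notMem hx]; rfl
    exact (Lp.eq_zero_iff_ae_eq_zero).mpr this
  have hSf : S f = 0 := by
    have h1 : Tendsto (fun n => S (g n)) atTop (nhds (S f)) :=
      (S.continuous.tendsto f).comp htend
    have h2 : (fun n => S (g n)) = fun _ => (0 : Lp ℝ p μ) := funext hSgn
    rw [h2] at h1
    exact tendsto_nhds_unique h1 tendsto_const_nhds
  have hae := (Lp.eq_zero_iff_ae_eq_zero).mp hSf
  have hcoe : ⇑(S f) =ᵐ[μ] Z.indicator ⇑(T f) := by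
    rw [hS]; exact hScoe (T f)
  filter_upwards [hae, hcoe] with x h1 h2 hx
  have hxZ : x ∈ Z := hx
  have h3 : Z.indicator (⇑(T f)) x = 0 := by
    rw [← h2]; simpa using h1
  rwa [Set.indicator_of_mem hxZ] at h3


end PaperAtoms
end
end

section
/- If A is a T-irreducible set, then F(A) ∩ P(A) is a T-atom, and it contains A a.e. -/
open MeasureTheory ENNReal Filter Set

noncomputable section

namespace PaperAtoms

variable {Ω : Type*} [MeasurableSpace Ω] {μ : MeasureTheory.Measure Ω} {p : ℝ≥0∞} [Fact (1 ≤ p)]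

lemma indicatorCLM_coeFn {A : Set Ω} (hA : MeasurableSet A) (f : Lp ℝ p μ) :
    ⇑(indicatorCLM μ p A f) =ᵐ[μ] A.indicator f := by
  unfold indicatorCLM
  rw [dif_pos hA, LinearMap.mkContinuous_apply]
  exact MemLp.coeFn_toLp (f := A.indicator f) ((Lp.memLp f).indicator hA)

lemma Invariant.inter_restrict {T : Lp ℝ p μ →L[ℝ] Lp ℝ p μ} {C A : Set Ω}
    (hC : Invariant T C) (hA : MeasurableSet A) :
    Invariant (restrictOp T A) (C ∩ A) := by
  refine ⟨hC.1.inter hA, ?_⟩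
  intro f hf hf0
  set g := indicatorCLM μ p A f with hg
  have hgf : ⇑g =ᵐ[μ] A.indicator f := indicatorCLM_coeFn hA f
  have hf' : 0 ≤ᵐ[μ] ⇑f := (Lp.coeFn_nonneg f).2 hf
  have hg0 : 0 ≤ g := by
    rw [← Lp.coeFn_nonneg]
    filter_upwards [hgf, hf'] with x hx hfx
    rw [hx]
    exact Set.indicator_apply_nonneg (fun _ => hfx)
  have hgC : ∀ᵐ x ∂μ, x ∉ C → g x = 0 := by
    filter_upwards [hgf, hf0] with x hx h0 hxC
    rw [hx]
    by_cases hxA : x ∈ A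
    · rw [Set.indicator_of_mem hxA]
      exact h0 (fun h => hxC h.1)
    · rw [Set.indicator_of_notMem hxA]
  have hTg := hC.2 g hg0 hgC
  have hcoe : ⇑(restrictOp T A f) =ᵐ[μ] A.indicator (⇑(T g)) :=
    indicatorCLM_coeFn hA (T g)
  filter_upwards [hcoe, hTg] with x hx hTgx hxCA
  rw [hx]
  by_cases hxA : x ∈ A
  · rw [Set.indicator_of_mem hxA]
    exact hTgx (fun hxC => hxCA ⟨hxC, hxA⟩)
  · rw [Set.indicator_of_notMem hxA]

variable {Ω : Type*} [MeasurableSpace Ω] {μ : MeasureTheory.Measure Ω} {p : ℝ≥0∞}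

theorem statement13 [SigmaFinite μ] (hμ : μ Set.univ ≠ 0) [Fact (1 ≤ p)]
    (hp : 1 < p) (hp' : p ≠ ∞)
    (T : Lp ℝ p μ →L[ℝ] Lp ℝ p μ) (hT : IsPositiveOp T)
    (A : Set Ω) (hAirr : Irreducible T A) (FA PA : Set Ω)
    (hFA : IsFuture T A FA) (hPA : IsPast T A PA) :
    Atom T (FA ∩ PA) ∧ A ≤ᵐ[μ] (FA ∩ PA : Set Ω) := by
  obtain ⟨hAmeas, hApos, hAmin⟩ := hAirr
  obtain ⟨hFAinv, hAFA, hFAmin⟩ := hFA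
  obtain ⟨hPAinv, hAPA, hPAmin⟩ := hPA
  have hAsub : A ≤ᵐ[μ] (FA ∩ PA : Set Ω) := by
    filter_upwards [hAFA, hAPA] with x h1 h2 hx
    exact ⟨h1 hx, h2 hx⟩
  -- key dichotomy for admissible sets
  have key : ∀ B : Set Ω, Admissible T B →
      (A ≤ᵐ[μ] B ∧ (FA ∩ PA : Set Ω) ≤ᵐ[μ] B) ∨
      (A ≤ᵐ[μ] Bᶜ ∧ (FA ∩ PA : Set Ω) ≤ᵐ[μ] Bᶜ) := by
    intro B hB
    refine MeasurableSpace.generateFrom_induction {B : Set Ω | Invariant T B}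
      (fun s _ => (A ≤ᵐ[μ] s ∧ (FA ∩ PA : Set Ω) ≤ᵐ[μ] s) ∨
        (A ≤ᵐ[μ] sᶜ ∧ (FA ∩ PA : Set Ω) ≤ᵐ[μ] sᶜ))
      ?_ ?_ ?_ ?_ B hB
    · -- invariant sets
      intro C hC _
      have hCA : Invariant (restrictOp T A) (C ∩ A) := hC.inter_restrict hAmeas
      have hCAle : (C ∩ A : Set Ω) ≤ᵐ[μ] A :=
        Filter.Eventually.of_forall (fun x hx => hx.2)
      rcases hAmin (C ∩ A) hCA hCAle with h0 | heq
      · -- A disjoint from C a.e.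
        right
        have hnm : ∀ᵐ x ∂μ, x ∉ C ∩ A := measure_eq_zero_iff_ae_notMem.mp h0
        have hAC : A ≤ᵐ[μ] Cᶜ := by
          filter_upwards [hnm] with x hx hxA hxC
          exact hx ⟨hxC, hxA⟩
        have hPAC : PA ≤ᵐ[μ] Cᶜ := by
          refine hPAmin Cᶜ ?_ hAC
          show Invariant T Cᶜᶜ
          rwa [compl_compl]
        refine ⟨hAC, ?_⟩
        filter_upwards [hPAC] with x hx hxFP
        exact hx hxFP.2
      · -- A ⊆ C a.e.
        left
        have hAC : A ≤ᵐ[μ] C := by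
          filter_upwards [Filter.eventuallyEq_set.mp heq] with x hx hxA
          exact (hx.mpr hxA).1
        have hFAC : FA ≤ᵐ[μ] C := hFAmin C hC hAC
        refine ⟨hAC, ?_⟩
        filter_upwards [hFAC] with x hx hxFP
        exact hx hxFP.1
    · -- empty set
      right
      constructor <;> exact Filter.Eventually.of_forall (fun x hx => Set.notMem_empty x)
    · -- complement
      intro t _ ht
      rcases ht with ⟨h1, h2⟩ | ⟨h1, h2⟩
      · right
        constructor
        · filter_upwards [h1] with x hx hxA
          exact not_not_intro (hx hxA)
        · filter_upwards [h2] with x hx hxA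
          exact not_not_intro (hx hxA)
      · left
        exact ⟨h1, h2⟩
    · -- countable union
      intro s _ hs
      by_cases h : ∃ n, A ≤ᵐ[μ] s n ∧ (FA ∩ PA : Set Ω) ≤ᵐ[μ] s n
      · obtain ⟨n, hn1, hn2⟩ := h
        left
        constructor
        · filter_upwards [hn1] with x hx hxA
          exact Set.mem_iUnion.mpr ⟨n, hx hxA⟩
        · filter_upwards [hn2] with x hx hxA
          exact Set.mem_iUnion.mpr ⟨n, hx hxA⟩
      · have h' : ∀ n, A ≤ᵐ[μ] (s n)ᶜ ∧ (FA ∩ PA : Set Ω) ≤ᵐ[μ] (s n)ᶜ := by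
          intro n
          rcases hs n with hl | hr
          · exact absurd ⟨n, hl⟩ h
          · exact hr
        right
        constructor
        · have : ∀ᵐ x ∂μ, ∀ n, x ∈ A → x ∈ (s n)ᶜ := ae_all_iff.mpr (fun n => (h' n).1)
          filter_upwards [this] with x hx hxA hxU
          obtain ⟨n, hn⟩ := Set.mem_iUnion.mp hxU
          exact hx n hxA hn
        · have : ∀ᵐ x ∂μ, ∀ n, x ∈ (FA ∩ PA : Set Ω) → x ∈ (s n)ᶜ :=
            ae_all_iff.mpr (fun n => (h' n).2)
          filter_upwards [this] with x hx hxA hxU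
          obtain ⟨n, hn⟩ := Set.mem_iUnion.mp hxU
          exact hx n hxA hn
  -- admissibility of FA ∩ PA
  have hAdmFA : Admissible T FA := MeasurableSpace.measurableSet_generateFrom hFAinv
  have hAdmPA : Admissible T PA := by
    have h1 : Admissible T PAᶜ := MeasurableSpace.measurableSet_generateFrom hPAinv
    have h2 : Admissible T PAᶜᶜ := h1.compl
    simpa only [compl_compl] using h2
  have hAdm : Admissible T (FA ∩ PA) := hAdmFA.inter hAdmPA
  have hpos : 0 < μ (FA ∩ PA) := lt_of_lt_of_le hApos (measure_mono_ae hAsub)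
  refine ⟨⟨hAdm, hpos, ?_⟩, hAsub⟩
  intro B hB hBsub
  rcases key B hB with ⟨hAB, hFB⟩ | ⟨hABc, hFBc⟩
  · right
    exact hBsub.antisymm hFB
  · left
    have hBBc : B ≤ᵐ[μ] Bᶜ := hBsub.trans hFBc
    have : ∀ᵐ x ∂μ, x ∉ B := by
      filter_upwards [hBBc] with x hx hxB
      exact hx hxB hxB
    exact measure_eq_zero_iff_ae_notMem.mpr this

end PaperAtoms
end
end

section
/- Let n ≥ 1. If A is a Tⁿ-atom (an atom of the positive operator Tⁿ), then there exists a T-atom B such that A ⊆ B a.e. -/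
open MeasureTheory ENNReal Filter Set

noncomputable section

namespace PaperAtoms

variable {Ω : Type*} [MeasurableSpace Ω] {μ : MeasureTheory.Measure Ω} {p : ℝ≥0∞} [Fact (1 ≤ p)]

variable {Ω : Type*} [MeasurableSpace Ω] {μ : MeasureTheory.Measure Ω} {p : ℝ≥0∞}

/-- A `T`-invariant set is `T^k`-invariant for every `k`, provided `T` is positive. -/
lemma invariant_pow [Fact (1 ≤ p)] {T : Lp ℝ p μ →L[ℝ] Lp ℝ p μ} (hT : IsPositiveOp T)
    {A : Set Ω} (hA : Invariant T A) : ∀ k : ℕ, Invariant (T ^ k) A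
  | 0 => ⟨hA.1, fun f _ h0 => by
      simpa only [pow_zero, ContinuousLinearMap.one_apply] using h0⟩
  | (k + 1) => ⟨hA.1, fun f hf h0 => by
      have h1 : ∀ᵐ x ∂μ, x ∉ A → T f x = 0 := hA.2 f hf h0
      have h2 := (invariant_pow hT hA k).2 (T f) (hT f hf) h1
      simpa only [pow_succ, ContinuousLinearMap.mul_apply] using h2⟩

/-- A `T`-admissible set is `T^k`-admissible for every `k`, provided `T` is positive. -/
lemma admissible_pow [Fact (1 ≤ p)] {T : Lp ℝ p μ →L[ℝ] Lp ℝ p μ} (hT : IsPositiveOp T)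
    {A : Set Ω} (hA : Admissible T A) (k : ℕ) : Admissible (T ^ k) A := by
  refine MeasurableSpace.generateFrom_mono (fun B hB => invariant_pow hT hB k) _ hA

/-- `T`-admissible sets are measurable. -/
lemma admissible_measurableSet [Fact (1 ≤ p)] {T : Lp ℝ p μ →L[ℝ] Lp ℝ p μ}
    {A : Set Ω} (hA : Admissible T A) : MeasurableSet A := by
  refine MeasurableSpace.generateFrom_le (fun B hB => hB.1) _ hA

theorem statement15 [SigmaFinite μ] (hμ : μ Set.univ ≠ 0) [Fact (1 ≤ p)]
    (hp : 1 < p) (hp' : p ≠ ∞)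
    (T : Lp ℝ p μ →L[ℝ] Lp ℝ p μ) (hT : IsPositiveOp T)
    (n : ℕ) (hn : 1 ≤ n) (A : Set Ω) (hA : Atom (T ^ n) A) :
    ∃ B : Set Ω, Atom T B ∧ A ≤ᵐ[μ] B := by
  classical
  obtain ⟨ν, hνfin, hμν, hνμ⟩ := exists_isFiniteMeasure_absolutelyContinuous μ
  -- Dichotomy: every `T`-admissible set either contains `A` a.e. or is a.e. disjoint from `A`.
  have dich : ∀ C : Set Ω, Admissible T C → A ≤ᵐ[μ] C ∨ A ≤ᵐ[μ] Cᶜ := by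
    intro C hC
    have hCn : Admissible (T ^ n) C := admissible_pow hT hC n
    have hAC : Admissible (T ^ n) (A ∩ C) := hA.1.inter hCn
    have hle : (A ∩ C : Set Ω) ≤ᵐ[μ] A :=
      HasSubset.Subset.eventuallyLE Set.inter_subset_left
    rcases hA.2.2 (A ∩ C) hAC hle with h0 | heq
    · right
      exact ae_le_set.2 (by convert h0 using 2; ext x; exact ⟨fun h => ⟨h.1, not_not.1 h.2⟩, fun h => ⟨h.1, not_not.2 h.2⟩⟩)
    · left
      exact (heq.symm.le.trans (HasSubset.Subset.eventuallyLE Set.inter_subset_right))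
  -- The family of `T`-admissible sets containing `A` a.e.
  set 𝓒 : Set (Set Ω) := {C | Admissible T C ∧ A ≤ᵐ[μ] C} with h𝓒
  have hUniv : (Set.univ : Set Ω) ∈ 𝓒 := by
    refine ⟨MeasurableSet.univ, ?_⟩
    rw [ae_le_set]
    simp
  set m : ℝ≥0∞ := ⨅ C : 𝓒, ν (C : Set Ω) with hm
  have hm_ne_top : m ≠ ∞ := by
    refine ne_top_of_le_ne_top (measure_ne_top ν Set.univ) ?_
    exact iInf_le (fun C : 𝓒 => ν (C : Set Ω)) ⟨Set.univ, hUniv⟩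
  -- a minimizing sequence
  have hsel : ∀ k : ℕ, ∃ C : Set Ω, C ∈ 𝓒 ∧ ν C < m + ((k : ℝ≥0∞) + 1)⁻¹ := by
    intro k
    have hlt : m < m + ((k : ℝ≥0∞) + 1)⁻¹ :=
      ENNReal.lt_add_right hm_ne_top (by simp)
    obtain ⟨⟨C, hC⟩, hCνlt⟩ := iInf_lt_iff.1 hlt
    exact ⟨C, hC, hCνlt⟩
  choose c hc𝓒 hcν using hsel
  set B : Set Ω := ⋂ k, c k with hB
  have hB𝓒 : B ∈ 𝓒 := by
    constructor
    · exact MeasurableSet.iInter (fun k => (hc𝓒 k).1)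
    · rw [ae_le_set, Set.diff_iInter]
      exact measure_iUnion_null (fun k => ae_le_set.1 (hc𝓒 k).2)
  have hmB : m ≤ ν B := iInf_le (fun C : 𝓒 => ν (C : Set Ω)) ⟨B, hB𝓒⟩
  have hνB : ν B = m := by
    refine le_antisymm ?_ hmB
    refine ENNReal.le_of_forall_pos_le_add fun ε hε _ => ?_
    obtain ⟨k, hk⟩ := ENNReal.exists_inv_nat_lt
      (show (ε : ℝ≥0∞) ≠ 0 by exact_mod_cast hε.ne')
    have h1 : ν B ≤ ν (c k) := measure_mono (Set.iInter_subset _ k)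
    have h2 : ((k : ℝ≥0∞) + 1)⁻¹ ≤ (k : ℝ≥0∞)⁻¹ :=
      ENNReal.inv_le_inv' (le_add_of_nonneg_right zero_le_one)
    calc ν B ≤ m + ((k : ℝ≥0∞) + 1)⁻¹ := h1.trans (hcν k).le
      _ ≤ m + (k : ℝ≥0∞)⁻¹ := add_le_add_right h2 m
      _ ≤ m + ε := add_le_add_right hk.le m
  -- a key consequence of minimality: subsets of `B` in `𝓒` coincide a.e. with `B`
  have hmin : ∀ C : Set Ω, C ∈ 𝓒 → ν (B \ C) = 0 := by
    intro C hC
    have hBC : B ∩ C ∈ 𝓒 := ⟨hB𝓒.1.inter hC.1, by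
      have h1 := hB𝓒.2
      have h2 := hC.2
      filter_upwards [h1, h2] with x hx1 hx2
      intro hxA
      exact ⟨hx1 hxA, hx2 hxA⟩⟩
    have h1 : m ≤ ν (B ∩ C) := iInf_le (fun C : 𝓒 => ν (C : Set Ω)) ⟨B ∩ C, hBC⟩
    have h2 : ν (B ∩ C) + ν (B \ C) = ν B := by
      rw [measure_inter_add_diff B (admissible_measurableSet hC.1)]
    have h3 : ν (B \ C) ≤ 0 := by
      have h4 : ν (B ∩ C) + ν (B \ C) ≤ ν (B ∩ C) + 0 := by
        rw [add_zero, h2, hνB]; exact h1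
      exact (ENNReal.add_le_add_iff_left (measure_ne_top ν _)).1 h4
    exact le_antisymm h3 zero_le
  refine ⟨B, ⟨hB𝓒.1, ?_, ?_⟩, hB𝓒.2⟩
  · -- positive measure
    have : μ A ≤ μ B := measure_mono_ae hB𝓒.2
    exact lt_of_lt_of_le hA.2.1 this
  · -- minimality
    intro D hD hDB
    rcases dich D hD with hAD | hADc
    · right
      have hBD0 : ν (B \ D) = 0 := hmin D ⟨hD, hAD⟩
      have hBD : B ≤ᵐ[μ] D := ae_le_set.2 (hμν hBD0)
      exact hDB.antisymm hBD
    · left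
      have hBDc0 : ν (B \ Dᶜ) = 0 := hmin Dᶜ ⟨MeasurableSet.compl hD, hADc⟩
      have hBD0 : μ (B ∩ D) = 0 := by
        have : ν (B ∩ D) = 0 := by rwa [Set.diff_compl] at hBDc0
        exact hμν this
      have hDres : μ (D \ B) = 0 := ae_le_set.1 hDB
      have : μ D ≤ μ (D ∩ B) + μ (D \ B) := measure_le_inter_add_diff μ D B
      rw [Set.inter_comm, hBD0, hDres, add_zero] at this
      exact le_antisymm this zero_le

end PaperAtoms
end
end
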